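/- arXiv:2202.04640 — 2 statements merged into one kernel-verified Lean document; each statement's English description precedes it below -/
import Mathlib

section
/- Expected relative Lipschitzness of the randomized finite-sum estimator: let f_i be convex, differentiable and L_i-smooth for each i ∈ [n], μ > 0, and p_j := √(L_j)/(2∑_i √(L_i)) + 1/(2n). Fix w encoded by (x, u₁, …, uₙ); for each j ∈ [n] fix x_a ∈ 𝒳 (the same for all j), u'_j ∈ 𝒳, x_+(j) ∈ 𝒳, u''_j ∈ 𝒳, and let w_aux(j) be encoded by (x_a, with j-th dual coordinate u'_j and all others u_i), and w_+(j) encoded by (x_+(j), with j-th dual coordinate u''_j and all others u_i). Then with λ := 2n + 2∑_i √(L_i)/√(nμ): ∑_{j=1}^n p_j [ ⟨(1/(n p_j))(∇f_j(u'_j) − ∇f_j(u_j)) + μ(x_a − x), x_a − x_+(j)⟩ + ⟨(1/(n p_j))((u'_j − x_a) − (u_j − x)), ∇f_j(u'_j) − ∇f_j(u''_j)⟩ ] ≤ λ ∑_{j=1}^n p_j [ μ V_x(x_a) + (1/n)V^{f_j}_{u'_j}(u_j) + μ V_{x_a}(x_+(j)) + (1/n)V^{f_j}_{u''_j}(u'_j)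 ]. -/
open scoped RealInnerProductSpace

/-- Bregman divergence `V^φ_u(v) = φ(v) - φ(u) - ⟪∇φ(u), v - u⟫`, with explicit gradient `φ'`. -/
noncomputable def breg {X : Type*} [NormedAddCommGroup X] [InnerProductSpace ℝ X]
    (φ : X → ℝ) (φ' : X → X) (u v : X) : ℝ :=
  φ v - φ u - ⟪φ' u, v - u⟫

section Aux
variable {X : Type*} [NormedAddCommGroup X] [InnerProductSpace ℝ X] [CompleteSpace X]

lemma line_hasDerivAt {f : X → ℝ} {f' : X → X} (hdiff : ∀ z, HasGradientAt f (f' z) z)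
    (u d : X) (t : ℝ) :
    HasDerivAt (fun s : ℝ => f (u + s • d)) ⟪f' (u + t • d), d⟫ t := by
  have h1 : HasDerivAt (fun s : ℝ => u + s • d) d t := by
    simpa using ((hasDerivAt_id t).smul_const d).const_add u
  have h2 := (hasGradientAt_iff_hasFDerivAt.mp (hdiff (u + t • d)))
  have h3 := h2.comp_hasDerivAt t h1
  simpa [Function.comp_def, InnerProductSpace.toDual_apply_apply] using h3

lemma grad_convex_lb {f : X → ℝ} {f' : X → X} (hconv : ConvexOn ℝ Set.univ f)
    (hdiff : ∀ z, HasGradientAt f (f' z) z) (u v : X) :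
    f u + ⟪f' u, v - u⟫ ≤ f v := by
  set d := v - u with hd
  have hline := line_hasDerivAt hdiff u d
  have heq : (fun t : ℝ => f (u + t • d)) = f ∘ (AffineMap.lineMap u v : ℝ →ᵃ[ℝ] X) := by
    funext t
    simp only [Function.comp_apply, AffineMap.lineMap_apply, vsub_eq_sub, vadd_eq_add, hd]
    congr 1
    abel
  have hg : ConvexOn ℝ Set.univ (fun t : ℝ => f (u + t • d)) := by
    rw [heq]
    have h := hconv.comp_affineMap (AffineMap.lineMap u v : ℝ →ᵃ[ℝ] X)
    rwa [Set.preimage_univ] at h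
  have h0 := hline 0
  rw [zero_smul, add_zero] at h0
  have hs := hg.le_slope_of_hasDerivAt (Set.mem_univ (0:ℝ)) (Set.mem_univ 1) zero_lt_one h0
  rw [slope_def_field] at hs
  simp only [sub_zero, div_one, one_smul, zero_smul, add_zero] at hs
  have huv : u + d = v := by rw [hd]; abel
  rw [huv] at hs
  linarith

lemma breg_nonneg {f : X → ℝ} {f' : X → X} (hconv : ConvexOn ℝ Set.univ f)
    (hdiff : ∀ z, HasGradientAt f (f' z) z) (b a : X) :
    0 ≤ breg f f' b a := by
  have := grad_convex_lb hconv hdiff b a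
  simp only [breg]; linarith

lemma descent_lemma {f : X → ℝ} {f' : X → X} {L : ℝ} (hL : 0 ≤ L)
    (hdiff : ∀ z, HasGradientAt f (f' z) z)
    (hsmooth : ∀ a b, ‖f' a - f' b‖ ≤ L * ‖a - b‖) (u v : X) :
    f v ≤ f u + ⟪f' u, v - u⟫ + L / 2 * ‖v - u‖ ^ 2 := by
  set d := v - u with hd
  have hline := line_hasDerivAt hdiff u d
  have hf'c : Continuous f' := by
    have hlip : LipschitzWith (Real.toNNReal L) f' := by
      apply LipschitzWith.of_dist_le_mul
      intro a b
      rw [dist_eq_norm, dist_eq_norm]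
      calc ‖f' a - f' b‖ ≤ L * ‖a - b‖ := hsmooth a b
        _ = (Real.toNNReal L) * ‖a - b‖ := by rw [Real.coe_toNNReal _ hL]
    exact hlip.continuous
  have hcont : Continuous fun t : ℝ => ⟪f' (u + t • d), d⟫ := by
    exact (hf'c.comp (by continuity)).inner continuous_const
  have key : ∀ t ∈ Set.Icc (0:ℝ) 1,
      ⟪f' (u + t • d), d⟫ ≤ ⟪f' u, d⟫ + L * ‖d‖ ^ 2 * t := by
    intro t ht
    have h1 : ⟪f' (u + t • d), d⟫ - ⟪f' u, d⟫ = ⟪f' (u + t • d) - f' u, d⟫ :=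
      (inner_sub_left _ _ _).symm
    have h2 : ⟪f' (u + t • d) - f' u, d⟫ ≤ ‖f' (u + t • d) - f' u‖ * ‖d‖ :=
      real_inner_le_norm _ _
    have h3 : ‖f' (u + t • d) - f' u‖ ≤ L * ‖t • d‖ := by
      simpa using hsmooth (u + t • d) u
    have h4 : ‖t • d‖ = t * ‖d‖ := by
      rw [norm_smul, Real.norm_eq_abs, abs_of_nonneg ht.1]
    rw [h4] at h3
    nlinarith [norm_nonneg d, mul_le_mul_of_nonneg_right h3 (norm_nonneg d)]
  have hInt1 : IntervalIntegrable (fun t => ⟪f' (u + t • d), d⟫) MeasureTheory.volume 0 1 :=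
    hcont.intervalIntegrable 0 1
  have hFTC : ∫ t in (0:ℝ)..1, ⟪f' (u + t • d), d⟫ = f (u + (1:ℝ) • d) - f (u + (0:ℝ) • d) :=
    intervalIntegral.integral_eq_sub_of_hasDerivAt (fun t _ => hline t) hInt1
  have hInt2 : IntervalIntegrable (fun t : ℝ => ⟪f' u, d⟫ + L * ‖d‖ ^ 2 * t)
      MeasureTheory.volume 0 1 := by
    apply Continuous.intervalIntegrable; fun_prop
  have hMono : ∫ t in (0:ℝ)..1, ⟪f' (u + t • d), d⟫
      ≤ ∫ t in (0:ℝ)..1, (⟪f' u, d⟫ + L * ‖d‖ ^ 2 * t) :=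
    intervalIntegral.integral_mono_on zero_le_one hInt1 hInt2 key
  have hIa : IntervalIntegrable (fun _ : ℝ => ⟪f' u, d⟫) MeasureTheory.volume 0 1 :=
    intervalIntegrable_const
  have hIb : IntervalIntegrable (fun t : ℝ => L * ‖d‖ ^ 2 * t) MeasureTheory.volume 0 1 := by
    apply Continuous.intervalIntegrable; fun_prop
  have hval : ∫ t in (0:ℝ)..1, (⟪f' u, d⟫ + L * ‖d‖ ^ 2 * t)
      = ⟪f' u, d⟫ + L * ‖d‖ ^ 2 / 2 := by
    rw [intervalIntegral.integral_add hIa hIb, intervalIntegral.integral_const_mul,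
      integral_id, intervalIntegral.integral_const]
    norm_num
    ring
  rw [one_smul, zero_smul, add_zero] at hFTC
  have huv : u + d = v := by rw [hd]; abel
  rw [huv] at hFTC
  rw [hFTC, hval] at hMono
  linarith

lemma coco {f : X → ℝ} {f' : X → X} {L : ℝ} (hL : 0 ≤ L)
    (hconv : ConvexOn ℝ Set.univ f)
    (hdiff : ∀ z, HasGradientAt f (f' z) z)
    (hsmooth : ∀ a b, ‖f' a - f' b‖ ≤ L * ‖a - b‖) (a b : X) :
    ‖f' a - f' b‖ ^ 2 ≤ 2 * L * breg f f' b a := by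
  rcases eq_or_lt_of_le hL with h0 | hLpos
  · have h1 : ‖f' a - f' b‖ ≤ 0 := by
      have := hsmooth a b; rw [← h0, zero_mul] at this; exact this
    have h2 : ‖f' a - f' b‖ = 0 := le_antisymm h1 (norm_nonneg _)
    have h3 := breg_nonneg hconv hdiff b a
    rw [h2, ← h0]
    nlinarith
  · set g := f' a - f' b with hgdef
    set c := 1 / L with hcdef
    have hc : L * c = 1 := by
      rw [hcdef]; field_simp
    have hcpos : 0 < c := by positivity
    set w := a - c • g with hw
    have hdesc := descent_lemma hL hdiff hsmooth a w
    have hlow := grad_convex_lb hconv hdiff b w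
    have hwa : w - a = -(c • g) := by rw [hw]; abel
    have h1 : ⟪f' a, w - a⟫ = -(c * ⟪f' a, g⟫) := by
      rw [hwa, inner_neg_right, real_inner_smul_right]
    have h2 : ‖w - a‖ ^ 2 = c ^ 2 * ‖g‖ ^ 2 := by
      rw [hwa, norm_neg, norm_smul, Real.norm_eq_abs, abs_of_pos hcpos, mul_pow]
    have hwb : w - b = (a - b) - c • g := by rw [hw]; abel
    have h3 : ⟪f' b, w - b⟫ = ⟪f' b, a - b⟫ - c * ⟪f' b, g⟫ := by
      rw [hwb, inner_sub_right, real_inner_smul_right]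
    have hg : ⟪f' a, g⟫ - ⟪f' b, g⟫ = ‖g‖ ^ 2 := by
      rw [← inner_sub_left, hgdef, real_inner_self_eq_norm_sq]
    have h5 : L / 2 * (c ^ 2 * ‖g‖ ^ 2) = c / 2 * ‖g‖ ^ 2 := by
      linear_combination (c * ‖g‖ ^ 2 / 2) * hc
    rw [h1, h2, h5] at hdesc
    rw [h3] at hlow
    have hgc : c * ⟪f' a, g⟫ - c * ⟪f' b, g⟫ = c * ‖g‖ ^ 2 := by
      linear_combination c * hg
    have hstep : c / 2 * ‖g‖ ^ 2 ≤ f a - f b - ⟪f' b, a - b⟫ := by linarith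
    simp only [breg]
    calc ‖g‖ ^ 2 = (L * c) * ‖g‖ ^ 2 := by rw [hc, one_mul]
      _ = 2 * L * (c / 2 * ‖g‖ ^ 2) := by ring
      _ ≤ 2 * L * (f a - f b - ⟪f' b, a - b⟫) := by
          apply mul_le_mul_of_nonneg_left hstep (by positivity)

lemma breg_three (φ : X → ℝ) (φ' : X → X) (a b c : X) :
    ⟪φ' b - φ' c, b - a⟫ = breg φ φ' b a + breg φ φ' c b - breg φ φ' c a := by
  simp only [breg, inner_sub_left, inner_sub_right]
  ring

lemma prod_bound (Z c A N t : ℝ) (hZ : 0 ≤ Z) (hc : 0 ≤ c) (hA : 0 ≤ A) (hN : 0 ≤ N)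
    (ht : 0 < t) (h : Z ^ 2 ≤ c ^ 2 * (2 * A)) :
    Z * N ≤ c / t * A + c * t * (N ^ 2 / 2) := by
  have h1 : Z ≤ c * Real.sqrt (2 * A) := by
    calc Z = Real.sqrt (Z ^ 2) := (Real.sqrt_sq hZ).symm
      _ ≤ Real.sqrt (c ^ 2 * (2 * A)) := Real.sqrt_le_sqrt h
      _ = c * Real.sqrt (2 * A) := by
          rw [Real.sqrt_mul (sq_nonneg c), Real.sqrt_sq hc]
  have h2' : t * (Real.sqrt (2 * A) * N) ≤ A + t ^ 2 * (N ^ 2 / 2) := by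
    nlinarith [sq_nonneg (Real.sqrt (2 * A) - t * N),
      Real.sq_sqrt (by linarith : (0:ℝ) ≤ 2 * A)]
  have h2 : Real.sqrt (2 * A) * N ≤ A / t + t * (N ^ 2 / 2) := by
    rw [show A / t + t * (N ^ 2 / 2) = (A + t ^ 2 * (N ^ 2 / 2)) / t by field_simp]
    rw [le_div_iff₀ ht]
    linarith
  calc Z * N ≤ (c * Real.sqrt (2 * A)) * N :=
        mul_le_mul_of_nonneg_right h1 hN
    _ = c * (Real.sqrt (2 * A) * N) := by ring
    _ ≤ c * (A / t + t * (N ^ 2 / 2)) := mul_le_mul_of_nonneg_left h2 hc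
    _ = c / t * A + c * t * (N ^ 2 / 2) := by ring

end Aux


set_option maxHeartbeats 1000000 in
/-- Expected relative Lipschitzness of the randomized finite-sum gradient estimator, with
sampling probabilities `p_j = √L_j/(2∑√L_i) + 1/(2n)` and `λ = 2n + 2∑√L_i/√(nμ)`. -/
theorem stmt_13 {X : Type*} [NormedAddCommGroup X] [InnerProductSpace ℝ X]
    [FiniteDimensional ℝ X]
    (n : ℕ) (hn : 1 ≤ n) (μ : ℝ) (hμ : 0 < μ)
    (f : Fin n → X → ℝ) (f' : Fin n → X → X) (L : Fin n → ℝ) (hL : ∀ i, 0 ≤ L i)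
    (hconv : ∀ i, ConvexOn ℝ Set.univ (f i))
    (hdiff : ∀ i x, HasGradientAt (f i) (f' i x) x)
    (hsmooth : ∀ i a b, ‖f' i a - f' i b‖ ≤ L i * ‖a - b‖)
    (p : Fin n → ℝ)
    (hp : ∀ j, p j = Real.sqrt (L j) / (2 * ∑ i, Real.sqrt (L i)) + 1 / (2 * (n : ℝ)))
    (lam : ℝ)
    (hlam : lam = 2 * (n : ℝ) + 2 * (∑ i, Real.sqrt (L i)) / Real.sqrt ((n : ℝ) * μ))
    -- `w` encoded by `(x, u₁, …, uₙ)`; `w_aux(j)` has 𝒳-coordinate `xa` (common to all `j`)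
    -- and `j`-th dual representative `u' j`; `w₊(j)` has 𝒳-coordinate `xplus j` and `j`-th
    -- dual representative `u'' j`.
    (x xa : X) (u u' u'' xplus : Fin n → X) :
    ∑ j, p j *
        (⟪(1 / ((n : ℝ) * p j)) • (f' j (u' j) - f' j (u j)) + μ • (xa - x), xa - xplus j⟫
          + ⟪(1 / ((n : ℝ) * p j)) • ((u' j - xa) - (u j - x)), f' j (u' j) - f' j (u'' j)⟫)
      ≤ lam * ∑ j, p j *
          (μ * (1 / 2 * ‖x - xa‖ ^ 2) + (1 / (n : ℝ)) * breg (f j) (f' j) (u' j) (u j)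
            + μ * (1 / 2 * ‖xa - xplus j‖ ^ 2)
            + (1 / (n : ℝ)) * breg (f j) (f' j) (u'' j) (u' j)) := by
  have hnpos : (0:ℝ) < n := by exact_mod_cast Nat.lt_of_lt_of_le Nat.zero_lt_one hn
  have hn1 : (1:ℝ) ≤ n := by exact_mod_cast hn
  set S : ℝ := ∑ i, Real.sqrt (L i) with hSdef
  have hS : 0 ≤ S := Finset.sum_nonneg fun i _ => Real.sqrt_nonneg _
  set t : ℝ := Real.sqrt ((n : ℝ) * μ) with htdef
  have htpos : 0 < t := Real.sqrt_pos.mpr (by positivity)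
  have ht2 : t ^ 2 = (n : ℝ) * μ := Real.sq_sqrt (by positivity)
  clear_value S t
  rw [Finset.mul_sum]
  apply Finset.sum_le_sum
  intro j _
  -- basic facts about p j and s
  have hfrac : 0 ≤ Real.sqrt (L j) / (2 * S) :=
    div_nonneg (Real.sqrt_nonneg _) (by linarith)
  have hhalf : (0:ℝ) < 1 / (2 * (n : ℝ)) := by positivity
  have hppos : 0 < p j := by rw [hp]; linarith
  set s : ℝ := 1 / ((n : ℝ) * p j) with hsdef
  have hspos : 0 < s := by rw [hsdef]; positivity
  clear_value s
  have hnp : 1 / 2 ≤ (n : ℝ) * p j := by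
    rw [hp, mul_add]
    have h3 : (n : ℝ) * (1 / (2 * n)) = 1 / 2 := by field_simp
    have h4 : 0 ≤ (n : ℝ) * (Real.sqrt (L j) / (2 * S)) :=
      mul_nonneg hnpos.le hfrac
    linarith
  have hs2 : s ≤ 2 := by
    have := one_div_le_one_div_of_le (by norm_num : (0:ℝ) < 1/2) hnp
    rw [hsdef]
    norm_num at this ⊢
    linarith
  have hsL : s * Real.sqrt (L j) ≤ 2 * S / n := by
    by_cases hLj : Real.sqrt (L j) = 0
    · rw [hLj, mul_zero]; positivity
    · have hLjpos : 0 < Real.sqrt (L j) := (Real.sqrt_nonneg _).lt_of_ne (Ne.symm hLj)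
      have hSpos : 0 < S := by
        rw [hSdef]
        exact lt_of_lt_of_le hLjpos
          (Finset.single_le_sum (fun i _ => Real.sqrt_nonneg (L i)) (Finset.mem_univ j))
      have hpj : Real.sqrt (L j) / (2 * S) ≤ p j := by rw [hp]; linarith
      have hd : 0 < (n : ℝ) * (Real.sqrt (L j) / (2 * S)) := by positivity
      have hsle : s ≤ 1 / ((n : ℝ) * (Real.sqrt (L j) / (2 * S))) := by
        rw [hsdef]
        exact one_div_le_one_div_of_le hd (mul_le_mul_of_nonneg_left hpj hnpos.le)
      calc s * Real.sqrt (L j)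
          ≤ (1 / ((n : ℝ) * (Real.sqrt (L j) / (2 * S)))) * Real.sqrt (L j) :=
            mul_le_mul_of_nonneg_right hsle hLjpos.le
        _ = 2 * S / n := by
            field_simp
  have hs2L : s ^ 2 * L j ≤ (2 * S / n) ^ 2 := by
    have h5 : (s * Real.sqrt (L j)) ^ 2 ≤ (2 * S / n) ^ 2 :=
      pow_le_pow_left₀ (by positivity) hsL 2
    calc s ^ 2 * L j = (s * Real.sqrt (L j)) ^ 2 := by
          rw [mul_pow, Real.sq_sqrt (hL j)]
      _ ≤ (2 * S / n) ^ 2 := h5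
  -- abbreviations
  set G1 : X := f' j (u' j) - f' j (u j) with hG1def
  set G2 : X := f' j (u' j) - f' j (u'' j) with hG2def
  set A : ℝ := breg (f j) (f' j) (u' j) (u j) with hAdef
  set B : ℝ := breg (f j) (f' j) (u'' j) (u' j) with hBdef
  set N1 : ℝ := ‖x - xa‖ with hN1def
  set N3 : ℝ := ‖xa - xplus j‖ with hN3def
  have hA : 0 ≤ A := by
    rw [hAdef]; exact breg_nonneg (hconv j) (hdiff j) _ _
  have hB : 0 ≤ B := by
    rw [hBdef]; exact breg_nonneg (hconv j) (hdiff j) _ _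
  have hG1sq : ‖G1‖ ^ 2 ≤ 2 * L j * A := by
    rw [hG1def, hAdef, norm_sub_rev]
    exact coco (hL j) (hconv j) (hdiff j) (hsmooth j) _ _
  have hG2sq : ‖G2‖ ^ 2 ≤ 2 * L j * B := by
    rw [hG2def, hBdef]
    exact coco (hL j) (hconv j) (hdiff j) (hsmooth j) _ _
  have hN1nn : 0 ≤ N1 := by rw [hN1def]; exact norm_nonneg _
  have hN3nn : 0 ≤ N3 := by rw [hN3def]; exact norm_nonneg _
  have hG1nn : 0 ≤ s * ‖G1‖ := mul_nonneg hspos.le (norm_nonneg _)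
  have hG2nn : 0 ≤ s * ‖G2‖ := mul_nonneg hspos.le (norm_nonneg _)
  have hb3 : s * ⟪u' j - u j, G2⟫ ≤ 2 * A + 2 * B := by
    have h7 : ⟪u' j - u j, G2⟫ = ⟪G2, u' j - u j⟫ := real_inner_comm _ _
    have h8 := breg_three (f j) (f' j) (u j) (u' j) (u'' j)
    have hC : 0 ≤ breg (f j) (f' j) (u'' j) (u j) :=
      breg_nonneg (hconv j) (hdiff j) _ _
    have h9 : ⟪G2, u' j - u j⟫ ≤ A + B := by
      rw [hG2def, hAdef, hBdef]
      rw [h8]; linarith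
    have h10 : s * ⟪u' j - u j, G2⟫ ≤ s * (A + B) := by
      rw [h7]; exact mul_le_mul_of_nonneg_left h9 hspos.le
    have h11 : s * (A + B) ≤ 2 * (A + B) :=
      mul_le_mul_of_nonneg_right hs2 (by linarith)
    linarith
  have hinner1 : ⟪G1, xa - xplus j⟫ ≤ ‖G1‖ * N3 := by
    rw [hN3def]; exact real_inner_le_norm _ _
  have hinner4 : ⟪x - xa, G2⟫ ≤ N1 * ‖G2‖ := by
    rw [hN1def]; exact real_inner_le_norm _ _
  have hinner2 : ⟪xa - x, xa - xplus j⟫ ≤ N1 * N3 := by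
    rw [hN1def, hN3def, norm_sub_rev x xa]
    exact real_inner_le_norm _ _
  clear_value G1 G2 A B N1 N3
  have hZ1 : (s * ‖G1‖) ^ 2 ≤ (2 * S / n) ^ 2 * (2 * A) := by
    have e1 : s ^ 2 * ‖G1‖ ^ 2 ≤ s ^ 2 * (2 * L j * A) :=
      mul_le_mul_of_nonneg_left hG1sq (sq_nonneg s)
    have e3 : 2 * A * (s ^ 2 * L j) ≤ 2 * A * (2 * S / n) ^ 2 :=
      mul_le_mul_of_nonneg_left hs2L (by linarith)
    have e2 : (s * ‖G1‖) ^ 2 = s ^ 2 * ‖G1‖ ^ 2 := by ring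
    have e4 : s ^ 2 * (2 * L j * A) = 2 * A * (s ^ 2 * L j) := by ring
    have e5 : (2 * S / n) ^ 2 * (2 * A) = 2 * A * (2 * S / n) ^ 2 := by ring
    linarith
  have hZ2 : (s * ‖G2‖) ^ 2 ≤ (2 * S / n) ^ 2 * (2 * B) := by
    have e1 : s ^ 2 * ‖G2‖ ^ 2 ≤ s ^ 2 * (2 * L j * B) :=
      mul_le_mul_of_nonneg_left hG2sq (sq_nonneg s)
    have e3 : 2 * B * (s ^ 2 * L j) ≤ 2 * B * (2 * S / n) ^ 2 :=
      mul_le_mul_of_nonneg_left hs2L (by linarith)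
    have e2 : (s * ‖G2‖) ^ 2 = s ^ 2 * ‖G2‖ ^ 2 := by ring
    have e4 : s ^ 2 * (2 * L j * B) = 2 * B * (s ^ 2 * L j) := by ring
    have e5 : (2 * S / n) ^ 2 * (2 * B) = 2 * B * (2 * S / n) ^ 2 := by ring
    linarith
  have hprod1 := prod_bound (s * ‖G1‖) (2 * S / n) A N3 t
    hG1nn (by positivity) hA hN3nn htpos hZ1
  have hprod2 := prod_bound (s * ‖G2‖) (2 * S / n) B N1 t
    hG2nn (by positivity) hB hN1nn htpos hZ2
  have htt : t * t = (n : ℝ) * μ := by rw [← ht2]; ring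
  have hct : (2 * S / n) * t = (2 * S / t) * μ := by
    field_simp
    linear_combination S * htt
  have hctn : (2 * S / n) / t = (2 * S / t) * (1 / n) := by ring
  -- the four bounds
  have hb1 : s * ⟪G1, xa - xplus j⟫ ≤ (2 * S / t) * ((1 / (n:ℝ)) * A)
      + (2 * S / t) * μ * (1 / 2 * N3 ^ 2) := by
    calc s * ⟪G1, xa - xplus j⟫ ≤ s * (‖G1‖ * N3) :=
          mul_le_mul_of_nonneg_left hinner1 hspos.le
      _ = (s * ‖G1‖) * N3 := by ring
      _ ≤ (2 * S / n) / t * A + (2 * S / n) * t * (N3 ^ 2 / 2) := hprod1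
      _ = (2 * S / t) * ((1 / (n:ℝ)) * A) + ((2 * S / n) * t) * (N3 ^ 2 / 2) := by ring
      _ = (2 * S / t) * ((1 / (n:ℝ)) * A) + (2 * S / t) * μ * (1 / 2 * N3 ^ 2) := by
          rw [hct]; ring
  have hb4 : s * ⟪x - xa, G2⟫ ≤ (2 * S / t) * ((1 / (n:ℝ)) * B)
      + (2 * S / t) * μ * (1 / 2 * N1 ^ 2) := by
    calc s * ⟪x - xa, G2⟫ ≤ s * (N1 * ‖G2‖) :=
          mul_le_mul_of_nonneg_left hinner4 hspos.le
      _ = (s * ‖G2‖) * N1 := by ring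
      _ ≤ (2 * S / n) / t * B + (2 * S / n) * t * (N1 ^ 2 / 2) := hprod2
      _ = (2 * S / t) * ((1 / (n:ℝ)) * B) + ((2 * S / n) * t) * (N1 ^ 2 / 2) := by ring
      _ = (2 * S / t) * ((1 / (n:ℝ)) * B) + (2 * S / t) * μ * (1 / 2 * N1 ^ 2) := by
          rw [hct]; ring
  have hb2 : μ * ⟪xa - x, xa - xplus j⟫ ≤ μ * (1 / 2 * N1 ^ 2) + μ * (1 / 2 * N3 ^ 2) := by
    have hyoung : N1 * N3 ≤ 1 / 2 * N1 ^ 2 + 1 / 2 * N3 ^ 2 := by linarith [sq_nonneg (N1 - N3)]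
    have := mul_le_mul_of_nonneg_left (le_trans hinner2 hyoung) hμ.le
    linarith [this]
  -- expand the LHS inner products
  have hsplit : (u' j - xa) - (u j - x) = (u' j - u j) + (x - xa) := by abel
  have hXeq : ⟪s • G1 + μ • (xa - x), xa - xplus j⟫
      + ⟪s • ((u' j - xa) - (u j - x)), G2⟫
      = s * ⟪G1, xa - xplus j⟫ + μ * ⟪xa - x, xa - xplus j⟫
        + (s * ⟪u' j - u j, G2⟫ + s * ⟪x - xa, G2⟫) := by
    rw [hsplit]
    simp only [inner_add_left, real_inner_smul_left]
    ring
  have hexp : lam * (μ * (1 / 2 * N1 ^ 2) + (1 / (n:ℝ)) * A + μ * (1 / 2 * N3 ^ 2)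
      + (1 / (n:ℝ)) * B)
      = 2 * A + 2 * B + (2 * S / t) * ((1 / (n:ℝ)) * A) + (2 * S / t) * ((1 / (n:ℝ)) * B)
        + (2 * (n:ℝ) + 2 * S / t) * (μ * (1 / 2 * N1 ^ 2))
        + (2 * (n:ℝ) + 2 * S / t) * (μ * (1 / 2 * N3 ^ 2)) := by
    rw [hlam]
    field_simp
    ring
  have hcore : ⟪s • G1 + μ • (xa - x), xa - xplus j⟫
      + ⟪s • ((u' j - xa) - (u j - x)), G2⟫
      ≤ lam * (μ * (1 / 2 * N1 ^ 2) + (1 / (n:ℝ)) * A + μ * (1 / 2 * N3 ^ 2)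
        + (1 / (n:ℝ)) * B) := by
    rw [hXeq, hexp]
    have hm1 : 0 ≤ μ * (1 / 2 * N1 ^ 2) := by positivity
    have hm3 : 0 ≤ μ * (1 / 2 * N3 ^ 2) := by positivity
    have hcoef : (0:ℝ) ≤ 2 * (n:ℝ) - 1 := by linarith
    have hsl1 : 0 ≤ (2 * (n:ℝ) - 1) * (μ * (1 / 2 * N1 ^ 2)) := mul_nonneg hcoef hm1
    have hsl3 : 0 ≤ (2 * (n:ℝ) - 1) * (μ * (1 / 2 * N3 ^ 2)) := mul_nonneg hcoef hm3
    have e1 : (2 * (n:ℝ) + 2 * S / t) * (μ * (1 / 2 * N1 ^ 2))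
        - (μ * (1 / 2 * N1 ^ 2) + (2 * S / t) * μ * (1 / 2 * N1 ^ 2))
        = (2 * (n:ℝ) - 1) * (μ * (1 / 2 * N1 ^ 2)) := by ring
    have e3 : (2 * (n:ℝ) + 2 * S / t) * (μ * (1 / 2 * N3 ^ 2))
        - (μ * (1 / 2 * N3 ^ 2) + (2 * S / t) * μ * (1 / 2 * N3 ^ 2))
        = (2 * (n:ℝ) - 1) * (μ * (1 / 2 * N3 ^ 2)) := by ring
    linarith [hb1, hb2, hb3, hb4, hsl1, hsl3, e1, e3]
  calc p j * (⟪s • G1 + μ • (xa - x), xa - xplus j⟫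
        + ⟪s • ((u' j - xa) - (u j - x)), G2⟫)
      ≤ p j * (lam * (μ * (1 / 2 * N1 ^ 2) + (1 / (n:ℝ)) * A + μ * (1 / 2 * N3 ^ 2)
        + (1 / (n:ℝ)) * B)) := mul_le_mul_of_nonneg_left hcore hppos.le
    _ = lam * (p j * (μ * (1 / 2 * N1 ^ 2) + (1 / (n:ℝ)) * A + μ * (1 / 2 * N3 ^ 2)
        + (1 / (n:ℝ)) * B)) := by ring
end

section
/- The proximally regularized minimax-finite-sum primal-dual operator is (1+γ)-strongly monotone with respect to its regularizer: for any anchor (x̄, ȳ, ū₁, …, ūₙ, v̄₁, …, v̄ₙ) and any γ ≥ 0, for all tuples z = (x, y, u₁, …, uₙ, v₁, …, vₙ) and z' = (x', y', u'₁, …, u'ₙ, v'₁, …, v'ₙ) in 𝒳 × 𝒴 × 𝒳ⁿ × 𝒴ⁿ: ⟨((1+γ)μ^x x + (1/n)∑_i ∇_x h_i(x, y) + (1/n)∑_i ∇f_i(u_i)) − ((1+γ)μ^x x' + (1/n)∑_i ∇_x h_i(x', y') + (1/n)∑_i ∇f_i(u'_i)), x − x'⟩ + ⟨((1+γ)μ^y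 y − (1/n)∑_i ∇_y h_i(x, y) + (1/n)∑_i ∇g_i(v_i)) − ((1+γ)μ^y y' − (1/n)∑_i ∇_y h_i(x', y') + (1/n)∑_i ∇g_i(v'_i)), y − y'⟩ + (1/n)∑_i ⟨((1+γ)u_i − x) − ((1+γ)u'_i − x'), ∇f_i(u_i) − ∇f_i(u'_i)⟩ + (1/n)∑_i ⟨((1+γ)v_i − y) − ((1+γ)v'_i − y'), ∇g_i(v_i) − ∇g_i(v'_i)⟩ ≥ (1+γ)·[μ^x‖x − x'‖² + μ^y‖y − y'‖² + (1/n)∑_i ⟨u_i − u'_i, ∇f_i(u_i) − ∇f_i(u'_i)⟩ + (1/n)∑_i ⟨v_i − v'_i, ∇g_i(v_i) − ∇g_i(v'_i)⟩]. -/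
open scoped RealInnerProductSpace

/-- Negation of a gradient. -/
lemma HasGradientAt.neg'' {X : Type*} [NormedAddCommGroup X] [InnerProductSpace ℝ X]
    [CompleteSpace X] {f : X → ℝ} {g x : X} (h : HasGradientAt f g x) :
    HasGradientAt (fun y => -(f y)) (-g) x := by
  rw [hasGradientAt_iff_hasFDerivAt] at h ⊢
  rw [map_neg]
  exact h.neg

/-- Gradient inequality for a convex differentiable function. -/
lemma grad_ineq' {X : Type*} [NormedAddCommGroup X] [InnerProductSpace ℝ X]
    [CompleteSpace X] {f : X → ℝ} {f' : X → X}
    (hc : ConvexOn ℝ Set.univ f) (hd : ∀ x, HasGradientAt f (f' x) x)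
    (a b : X) : f a + ⟪f' a, b - a⟫ ≤ f b := by
  set ℓ : ℝ → X := fun t => a + t • (b - a) with hℓ
  have hline : ∀ t : ℝ, HasDerivAt ℓ (b - a) t := by
    intro t
    simpa only [id, one_smul] using ((hasDerivAt_id t).smul_const (b - a)).const_add a
  have hφ : ∀ t : ℝ, HasDerivAt (f ∘ ℓ) ⟪f' (ℓ t), b - a⟫ t := by
    intro t
    have h1 : HasFDerivAt f (InnerProductSpace.toDual ℝ X (f' (ℓ t))) (ℓ t) :=
      (hasGradientAt_iff_hasFDerivAt).mp (hd (ℓ t))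
    simpa using h1.comp_hasDerivAt t (hline t)
  have hconv : ConvexOn ℝ Set.univ (f ∘ ℓ) := by
    have := hc.comp_affineMap (AffineMap.lineMap a b : ℝ →ᵃ[ℝ] X)
    simp only [Set.preimage_univ] at this
    suffices hh : f ∘ ℓ = f ∘ ⇑(AffineMap.lineMap a b : ℝ →ᵃ[ℝ] X) by rw [hh]; exact this
    funext t
    show f (ℓ t) = f (AffineMap.lineMap a b t)
    congr 1
    simp [ℓ, AffineMap.lineMap_apply]
    abel
  have key := hconv.le_slope_of_hasDerivAt (Set.mem_univ (0:ℝ)) (Set.mem_univ (1:ℝ))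
    one_pos (hφ 0)
  have hs : slope (f ∘ ℓ) 0 1 = f b - f a := by
    simp [slope, ℓ, Function.comp]
  rw [hs] at key
  have h0 : ℓ 0 = a := by simp [ℓ]
  rw [h0] at key
  linarith

/-- Monotonicity of the gradient operator of a convex-concave saddle function. -/
lemma saddle_mono' {X Y : Type*} [NormedAddCommGroup X] [InnerProductSpace ℝ X]
    [CompleteSpace X] [NormedAddCommGroup Y] [InnerProductSpace ℝ Y] [CompleteSpace Y]
    {h : X × Y → ℝ} {hx : X × Y → X} {hy : X × Y → Y}
    (hcc₁ : ∀ (y : Y), ConvexOn ℝ Set.univ (fun x => h (x, y)))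
    (hcc₂ : ∀ (x : X), ConcaveOn ℝ Set.univ (fun y => h (x, y)))
    (hdx : ∀ (p : X × Y), HasGradientAt (fun x => h (x, p.2)) (hx p) p.1)
    (hdy : ∀ (p : X × Y), HasGradientAt (fun y => h (p.1, y)) (hy p) p.2)
    (x x' : X) (y y' : Y) :
    0 ≤ ⟪x - x', hx (x, y) - hx (x', y')⟫ - ⟪y - y', hy (x, y) - hy (x', y')⟫ := by
  have c1 := grad_ineq' (hcc₁ y) (fun w => hdx (w, y)) x x'
  have c2 := grad_ineq' (hcc₁ y') (fun w => hdx (w, y')) x' x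
  have c3 := grad_ineq' (hcc₂ x).neg (fun w => (hdy (x, w)).neg'') y y'
  have c4 := grad_ineq' (hcc₂ x').neg (fun w => (hdy (x', w)).neg'') y' y
  rw [real_inner_comm (hx (x, y) - hx (x', y')) (x - x'), real_inner_comm (hy (x, y) - hy (x', y')) (y - y')]
  simp only [inner_sub_left, inner_sub_right, inner_neg_left, Pi.neg_apply] at c1 c2 c3 c4 ⊢
  linarith

/-- The proximally regularized minimax-finite-sum primal-dual operator is `(1+γ)`-strongly
monotone with respect to its regularizer (in the primal parametrization). -/
theorem stmt_15 {X Y : Type*} [NormedAddCommGroup X] [InnerProductSpace ℝ X]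
    [FiniteDimensional ℝ X] [NormedAddCommGroup Y] [InnerProductSpace ℝ Y]
    [FiniteDimensional ℝ Y]
    (n : ℕ) (hn : 1 ≤ n) (μx μy : ℝ) (hμx : 0 < μx) (hμy : 0 < μy)
    (γ : ℝ) (hγ : 0 ≤ γ)
    (f : Fin n → X → ℝ) (f' : Fin n → X → X)
    (g : Fin n → Y → ℝ) (g' : Fin n → Y → Y)
    (h : Fin n → X × Y → ℝ) (hx : Fin n → X × Y → X) (hy : Fin n → X × Y → Y)
    (hfconv : ∀ i, ConvexOn ℝ Set.univ (f i))
    (hgconv : ∀ i, ConvexOn ℝ Set.univ (g i))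
    (hfd : ∀ i x, HasGradientAt (f i) (f' i x) x)
    (hgd : ∀ i y, HasGradientAt (g i) (g' i y) y)
    (hcc₁ : ∀ i (y : Y), ConvexOn ℝ Set.univ (fun x => h i (x, y)))
    (hcc₂ : ∀ i (x : X), ConcaveOn ℝ Set.univ (fun y => h i (x, y)))
    (hdx : ∀ i (p : X × Y), HasGradientAt (fun x => h i (x, p.2)) (hx i p) p.1)
    (hdy : ∀ i (p : X × Y), HasGradientAt (fun y => h i (p.1, y)) (hy i p) p.2)
    -- anchor point (contributes only a constant shift to the operator)
    (xbar : X) (ybar : Y) (ubar : Fin n → X) (vbar : Fin n → Y)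
    -- two tuples `z = (x, y, u, v)` and `z' = (x', y', u', v')`
    (x x' : X) (y y' : Y) (u u' : Fin n → X) (v v' : Fin n → Y) :
    ⟪(((1 + γ) * μx) • x + (1 / (n : ℝ)) • ∑ i, hx i (x, y)
          + (1 / (n : ℝ)) • ∑ i, f' i (u i))
        - (((1 + γ) * μx) • x' + (1 / (n : ℝ)) • ∑ i, hx i (x', y')
            + (1 / (n : ℝ)) • ∑ i, f' i (u' i)), x - x'⟫
      + ⟪(((1 + γ) * μy) • y - (1 / (n : ℝ)) • ∑ i, hy i (x, y)
            + (1 / (n : ℝ)) • ∑ i, g' i (v i))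
          - (((1 + γ) * μy) • y' - (1 / (n : ℝ)) • ∑ i, hy i (x', y')
              + (1 / (n : ℝ)) • ∑ i, g' i (v' i)), y - y'⟫
      + (1 / (n : ℝ)) * ∑ i,
          ⟪((1 + γ) • u i - x) - ((1 + γ) • u' i - x'), f' i (u i) - f' i (u' i)⟫
      + (1 / (n : ℝ)) * ∑ i,
          ⟪((1 + γ) • v i - y) - ((1 + γ) • v' i - y'), g' i (v i) - g' i (v' i)⟫
    ≥ (1 + γ) *
        (μx * ‖x - x'‖ ^ 2 + μy * ‖y - y'‖ ^ 2
          + (1 / (n : ℝ)) * ∑ i, ⟪u i - u' i, f' i (u i) - f' i (u' i)⟫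
          + (1 / (n : ℝ)) * ∑ i, ⟪v i - v' i, g' i (v i) - g' i (v' i)⟫) := by
  have key : ∀ i : Fin n, 0 ≤ ⟪x - x', hx i (x, y) - hx i (x', y')⟫
      - ⟪y - y', hy i (x, y) - hy i (x', y')⟫ :=
    fun i => saddle_mono' (hcc₁ i) (hcc₂ i) (hdx i) (hdy i) x x' y y'
  rw [ge_iff_le, ← sub_nonneg]
  have hS : 0 ≤ (1 / (n : ℝ)) * ∑ i, (⟪x - x', hx i (x, y) - hx i (x', y')⟫
      - ⟪y - y', hy i (x, y) - hy i (x', y')⟫) :=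
    mul_nonneg (by positivity) (Finset.sum_nonneg fun i _ => key i)
  refine hS.trans_eq ?_
  rw [real_inner_comm (x - x'), real_inner_comm (y - y'),
    ← real_inner_self_eq_norm_sq (x - x'), ← real_inner_self_eq_norm_sq (y - y')]
  simp only [inner_sub_left, inner_add_left, inner_sub_right, inner_add_right,
    real_inner_smul_left, real_inner_smul_right, sum_inner, inner_sum,
    Finset.sum_sub_distrib, Finset.sum_add_distrib, ← Finset.mul_sum]
  ring
end
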